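/- For a non-negative continuous random variable X with cdf F and survival function F̄, the weighted cumulative residual entropy satisfies ξ^w(X) = −(1/2) ∫₀^∞ x² (1 + log F̄(x)) dF(x). -/

import Mathlib

open MeasureTheory Set Real Filter Topology
open scoped ENNReal

section
variable (μ : Measure ℝ) [IsProbabilityMeasure μ]


lemma G_tendsto : Tendsto (fun n : ℕ => μ (Set.Ioi (n : ℝ))) atTop (𝓝 0) := by
  have h : ⋂ n : ℕ, Set.Ioi (n : ℝ) = ∅ := by
    ext t
    simp only [mem_iInter, mem_Ioi, mem_empty_iff_false, iff_false, not_forall, not_lt]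
    obtain ⟨n, hn⟩ := exists_nat_gt t
    exact ⟨n, hn.le⟩
  have := tendsto_measure_iInter_atTop (μ := μ)
    (fun n : ℕ => (measurableSet_Ioi).nullMeasurableSet)
    (fun a b hab => Ioi_subset_Ioi (Nat.cast_le.mpr hab)) ⟨0, measure_ne_top μ _⟩
  rwa [h, measure_empty] at this

/-- the level set of the survival function has measure `u`. -/
lemma level_meas (hcont : ∀ x : ℝ, μ {x} = 0) {u : ℝ} (hu : 0 < u) {x : ℝ}
    (hux : ENNReal.ofReal u ≤ μ (Set.Ioi x)) :
    μ {t : ℝ | μ (Set.Ioi t) < ENNReal.ofReal u} = ENNReal.ofReal u := by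
  set S : Set ℝ := {t : ℝ | μ (Set.Ioi t) < ENNReal.ofReal u} with hS
  have hupper : ∀ ⦃t⦄, t ∈ S → ∀ ⦃s⦄, t ≤ s → s ∈ S := fun t ht s hts =>
    lt_of_le_of_lt (measure_mono (Ioi_subset_Ioi hts)) ht
  have hne : S.Nonempty := by
    have h0 : (0:ENNReal) < ENNReal.ofReal u := ENNReal.ofReal_pos.mpr hu
    obtain ⟨n, hn⟩ := ((G_tendsto μ).eventually_lt_const h0).exists
    exact ⟨(n:ℝ), hn⟩
  have hbdd : BddBelow S := by
    refine ⟨x, fun t ht => ?_⟩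
    by_contra h
    push_neg at h
    exact absurd (lt_of_le_of_lt (hux.trans (measure_mono (Ioi_subset_Ioi h.le))) ht) (lt_irrefl _)
  set a := sInf S with ha
  have hdiv : ∀ m n : ℕ, m ≤ n → (1:ℝ)/((n:ℝ)+1) ≤ 1/((m:ℝ)+1) := by
    intro m n hmn
    apply one_div_le_one_div_of_le (by positivity)
    have : (m:ℝ) ≤ n := Nat.cast_le.mpr hmn
    linarith
  have hIoi : Set.Ioi a ⊆ S := fun t ht => by
    obtain ⟨s, hs, hst⟩ := exists_lt_of_csInf_lt hne ht
    exact hupper hs hst.le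
  have hIci : S ⊆ Set.Ici a := fun t ht => csInf_le hbdd ht
  have hmeasS : μ S = μ (Set.Ioi a) := by
    refine le_antisymm ?_ (measure_mono hIoi)
    calc μ S ≤ μ (Set.Ici a) := measure_mono hIci
      _ = μ (Set.Ioi a) := (measure_congr (Ioi_ae_eq_Ici' (hcont a))).symm
  rw [hmeasS]
  refine le_antisymm ?_ ?_
  · -- μ (Ioi a) ≤ ofReal u
    have hU : ⋃ n : ℕ, Set.Ioi (a + 1/((n:ℝ)+1)) = Set.Ioi a := by
      ext t
      simp only [mem_iUnion, mem_Ioi]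
      constructor
      · rintro ⟨n, hn⟩
        have : (0:ℝ) < 1/((n:ℝ)+1) := by positivity
        linarith
      · intro ht
        obtain ⟨n, hn⟩ := exists_nat_one_div_lt (sub_pos.mpr ht)
        exact ⟨n, by push_cast at hn ⊢; linarith⟩
    have hseq := tendsto_measure_iUnion_atTop (μ := μ)
      (s := fun n : ℕ => Set.Ioi (a + 1/((n:ℝ)+1)))
      (fun m n hmn => Ioi_subset_Ioi (by linarith [hdiv m n hmn]))
    rw [hU] at hseq
    refine le_of_tendsto hseq (Eventually.of_forall fun n => ?_)
    have hmem : a + 1/((n:ℝ)+1) ∈ S := by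
      apply hIoi
      rw [mem_Ioi]
      have : (0:ℝ) < 1/((n:ℝ)+1) := by positivity
      linarith
    exact hmem.le
  · -- ofReal u ≤ μ (Ioi a)
    have hI : ⋂ n : ℕ, Set.Ioi (a - 1/((n:ℝ)+1)) = Set.Ici a := by
      ext t
      simp only [mem_iInter, mem_Ioi, mem_Ici]
      constructor
      · intro h
        by_contra hta
        push_neg at hta
        obtain ⟨n, hn⟩ := exists_nat_one_div_lt (sub_pos.mpr hta)
        have h2 := h n
        push_cast at hn h2 ⊢
        linarith
      · intro h n
        have : (0:ℝ) < 1/((n:ℝ)+1) := by positivity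
        linarith
    have hseq := tendsto_measure_iInter_atTop (μ := μ)
      (s := fun n : ℕ => Set.Ioi (a - 1/((n:ℝ)+1)))
      (fun n : ℕ => measurableSet_Ioi.nullMeasurableSet)
      (fun m n hmn => Ioi_subset_Ioi (by linarith [hdiv m n hmn])) ⟨0, measure_ne_top μ _⟩
    rw [hI] at hseq
    rw [measure_congr (Ioi_ae_eq_Ici' (hcont a))]
    refine ge_of_tendsto hseq (Eventually.of_forall fun n => ?_)
    have hnot : a - 1/((n:ℝ)+1) ∉ S := fun hmem => by
      have h2 := csInf_le hbdd hmem
      have hpos : (0:ℝ) < 1/((n:ℝ)+1) := by positivity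
      rw [← ha] at h2
      linarith
    simpa [hS, not_lt] using hnot


lemma zero_set (hcont : ∀ x : ℝ, μ {x} = 0) : μ {t : ℝ | μ (Set.Ioi t) = 0} = 0 := by
  set Z : Set ℝ := {t : ℝ | μ (Set.Ioi t) = 0} with hZ
  have hupper : ∀ ⦃t⦄, t ∈ Z → ∀ ⦃s⦄, t ≤ s → s ∈ Z := fun t ht s hts =>
    le_antisymm (ht ▸ measure_mono (Ioi_subset_Ioi hts)) (zero_le)
  rcases Set.eq_empty_or_nonempty Z with h | hne
  · simp [h]
  by_cases hbdd : BddBelow Z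
  · set b := sInf Z with hb
    have hIoi : Set.Ioi b ⊆ Z := fun t ht => by
      obtain ⟨s, hs, hst⟩ := exists_lt_of_csInf_lt hne ht
      exact hupper hs hst.le
    have hIoib : μ (Set.Ioi b) = 0 := by
      have hU : Set.Ioi b = ⋃ n : ℕ, Set.Ioi (b + 1/((n:ℝ)+1)) := by
        ext t
        simp only [mem_iUnion, mem_Ioi]
        constructor
        · intro ht
          obtain ⟨n, hn⟩ := exists_nat_one_div_lt (sub_pos.mpr ht)
          exact ⟨n, by push_cast at hn ⊢; linarith⟩
        · rintro ⟨n, hn⟩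
          have : (0:ℝ) < 1/((n:ℝ)+1) := by positivity
          linarith
      rw [hU]
      refine measure_iUnion_null fun n => ?_
      have hmem : b + 1/((n:ℝ)+1) ∈ Z := hIoi (by
        rw [mem_Ioi]
        have : (0:ℝ) < 1/((n:ℝ)+1) := by positivity
        linarith)
      exact hmem
    refine le_antisymm ?_ (zero_le)
    calc μ Z ≤ μ (Set.Ici b) := measure_mono (fun t ht => csInf_le hbdd ht)
      _ = μ (Set.Ioi b) := (measure_congr (Ioi_ae_eq_Ici' (hcont b))).symm
      _ = 0 := hIoib
  · exfalso
    have hall : ∀ x : ℝ, μ (Set.Ioi x) = 0 := by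
      intro x
      rw [not_bddBelow_iff] at hbdd
      obtain ⟨t, ht, htx⟩ := hbdd x
      exact le_antisymm (ht ▸ measure_mono (Ioi_subset_Ioi htx.le)) (zero_le)
    have huniv : (Set.univ : Set ℝ) = ⋃ n : ℕ, Set.Ioi (-(n:ℝ)) := by
      ext t
      simp only [mem_univ, mem_iUnion, mem_Ioi, true_iff]
      obtain ⟨n, hn⟩ := exists_nat_gt (-t)
      exact ⟨n, by linarith⟩
    have : μ Set.univ = 0 := by
      rw [huniv]
      exact measure_iUnion_null fun n => hall _
    simp [measure_univ] at this

lemma level_meas_restrict (hcont : ∀ x : ℝ, μ {x} = 0) (x : ℝ) {u : ℝ} (hu : 0 < u)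
    (hlevel : ENNReal.ofReal u ≤ μ (Set.Ioi x) →
      μ {t : ℝ | μ (Set.Ioi t) < ENNReal.ofReal u} = ENNReal.ofReal u) :
    μ ({t : ℝ | (μ (Set.Ioi t)).toReal < u} ∩ Set.Ioi x)
      = min (ENNReal.ofReal u) (μ (Set.Ioi x)) := by
  have hset : {t : ℝ | (μ (Set.Ioi t)).toReal < u} = {t : ℝ | μ (Set.Ioi t) < ENNReal.ofReal u} := by
    ext t
    simp only [mem_setOf_eq]
    rw [ENNReal.lt_ofReal_iff_toReal_lt (measure_ne_top μ _)]
  rw [hset]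
  by_cases h : ENNReal.ofReal u ≤ μ (Set.Ioi x)
  · have hsub : {t : ℝ | μ (Set.Ioi t) < ENNReal.ofReal u} ⊆ Set.Ioi x := by
      intro t ht
      rw [mem_setOf_eq] at ht
      rw [mem_Ioi]
      by_contra hle
      push_neg at hle
      exact absurd (lt_of_le_of_lt (h.trans (measure_mono (Ioi_subset_Ioi hle))) ht) (lt_irrefl _)
    rw [Set.inter_eq_left.mpr hsub, hlevel h, min_eq_left h]
  · push_neg at h
    have hsub : Set.Ioi x ⊆ {t : ℝ | μ (Set.Ioi t) < ENNReal.ofReal u} := by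
      intro t ht
      rw [mem_Ioi] at ht
      exact lt_of_le_of_lt (measure_mono (Ioi_subset_Ioi ht.le)) h
    rw [Set.inter_eq_right.mpr hsub, min_eq_right h.le]


lemma G_anti : Antitone (fun t : ℝ => (μ (Set.Ioi t)).toReal) := fun _ _ hab =>
  ENNReal.toReal_mono (measure_ne_top μ _) (measure_mono (Ioi_subset_Ioi hab))

lemma G_meas : Measurable (fun t : ℝ => (μ (Set.Ioi t)).toReal) := (G_anti μ).measurable

lemma G_le_one (t : ℝ) : (μ (Set.Ioi t)).toReal ≤ 1 :=
  ENNReal.toReal_le_of_le_ofReal one_pos.le (by simpa using prob_le_one)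

lemma inv_integrableOn {c d : ℝ} (hc : 0 < c) (hcd : c ≤ d) :
    IntegrableOn (fun u : ℝ => u⁻¹) (Set.Ioc c d) volume := by
  refine (intervalIntegrable_iff_integrableOn_Ioc_of_le hcd).mp ?_
  refine intervalIntegral.intervalIntegrable_inv (fun y hy => ?_) continuousOn_id
  rw [Set.uIcc_of_le hcd] at hy
  exact ne_of_gt (lt_of_lt_of_le hc hy.1)

lemma inv_lintegral {c : ℝ} (hc : 0 < c) (hc1 : c ≤ 1) :
    ∫⁻ u in Set.Ioc c 1, ENNReal.ofReal u⁻¹ ∂volume = ENNReal.ofReal (-Real.log c) := by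
  rw [← ofReal_integral_eq_lintegral_ofReal (inv_integrableOn hc hc1)
    ((ae_restrict_mem measurableSet_Ioc).mono fun u hu => inv_nonneg.mpr (hc.trans hu.1).le)]
  congr 1
  rw [← intervalIntegral.integral_of_le hc1, integral_inv (by
    rw [Set.uIcc_of_le hc1]; intro h; exact absurd h.1 (not_le.mpr hc))]
  rw [Real.log_div one_ne_zero (ne_of_gt hc), Real.log_one, zero_sub]

lemma key_lintegral (hcont : ∀ x : ℝ, μ {x} = 0)
    (hzero : μ {t : ℝ | μ (Set.Ioi t) = 0} = 0)
    (hlevel : ∀ {u : ℝ}, 0 < u → ∀ {x : ℝ}, ENNReal.ofReal u ≤ μ (Set.Ioi x) →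
      μ {t : ℝ | μ (Set.Ioi t) < ENNReal.ofReal u} = ENNReal.ofReal u)
    (hlevelr : ∀ (x : ℝ) {u : ℝ}, 0 < u →
      (ENNReal.ofReal u ≤ μ (Set.Ioi x) →
        μ {t : ℝ | μ (Set.Ioi t) < ENNReal.ofReal u} = ENNReal.ofReal u) →
      μ ({t : ℝ | (μ (Set.Ioi t)).toReal < u} ∩ Set.Ioi x)
        = min (ENNReal.ofReal u) (μ (Set.Ioi x)))
    (x : ℝ) :
    ∫⁻ t in Set.Ioi x, ENNReal.ofReal (-Real.log (μ (Set.Ioi t)).toReal) ∂μ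
      = ENNReal.ofReal ((μ (Set.Ioi x)).toReal * (1 - Real.log (μ (Set.Ioi x)).toReal)) := by
  by_cases hg0 : μ (Set.Ioi x) = 0
  · rw [Measure.restrict_eq_zero.mpr hg0]
    simp [hg0]
  set g := (μ (Set.Ioi x)).toReal with hgdef
  have hgpos : 0 < g := ENNReal.toReal_pos hg0 (measure_ne_top μ _)
  have hg1 : g ≤ 1 := G_le_one μ x
  set F : ℝ × ℝ → ℝ≥0∞ := fun p =>
    ({q : ℝ × ℝ | (μ (Set.Ioi q.1)).toReal < q.2}.indicator (fun q => ENNReal.ofReal q.2⁻¹)) p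
    with hFdef
  have hsetmeas : MeasurableSet {q : ℝ × ℝ | (μ (Set.Ioi q.1)).toReal < q.2} :=
    measurableSet_lt ((G_meas μ).comp measurable_fst) measurable_snd
  have hFmeas : Measurable F :=
    Measurable.indicator ((measurable_snd.inv).ennreal_ofReal) hsetmeas
  have hstep1 : ∀ t : ℝ, 0 < (μ (Set.Ioi t)).toReal →
      ENNReal.ofReal (-Real.log (μ (Set.Ioi t)).toReal)
        = ∫⁻ u in Set.Ioc (0:ℝ) 1, F (t, u) ∂volume := by
    intro t ht
    set c := (μ (Set.Ioi t)).toReal with hc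
    have hc1 : c ≤ 1 := G_le_one μ t
    have heq : (fun u => F (t, u))
        = fun u => (Set.Ioi c).indicator (fun u => ENNReal.ofReal u⁻¹) u := by
      funext u
      simp [hFdef, Set.indicator_apply, Set.mem_setOf_eq, Set.mem_Ioi, ← hc]
    rw [heq, lintegral_indicator measurableSet_Ioi,
      Measure.restrict_restrict measurableSet_Ioi]
    have hinter : Set.Ioi c ∩ Set.Ioc (0:ℝ) 1 = Set.Ioc c 1 := by
      ext u
      simp only [Set.mem_inter_iff, Set.mem_Ioi, Set.mem_Ioc]
      exact ⟨fun ⟨h1, _, h3⟩ => ⟨h1, h3⟩, fun ⟨h1, h2⟩ => ⟨h1, ht.trans h1, h2⟩⟩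
    rw [hinter, inv_lintegral ht hc1]
  have hZ : ∀ᵐ t ∂(μ.restrict (Set.Ioi x)), 0 < (μ (Set.Ioi t)).toReal := by
    refine ae_restrict_of_ae ?_
    have h1 : ∀ᵐ t ∂μ, ¬ (μ (Set.Ioi t) = 0) := by
      rw [ae_iff]
      simpa using hzero
    filter_upwards [h1] with t ht
    exact ENNReal.toReal_pos ht (measure_ne_top μ _)
  calc ∫⁻ t in Set.Ioi x, ENNReal.ofReal (-Real.log (μ (Set.Ioi t)).toReal) ∂μ
      = ∫⁻ t in Set.Ioi x, (∫⁻ u in Set.Ioc (0:ℝ) 1, F (t, u) ∂volume) ∂μ := by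
        refine lintegral_congr_ae ?_
        filter_upwards [hZ] with t ht using hstep1 t ht
    _ = ∫⁻ u in Set.Ioc (0:ℝ) 1, (∫⁻ t in Set.Ioi x, F (t, u) ∂μ) ∂volume :=
        lintegral_lintegral_swap hFmeas.aemeasurable
    _ = ∫⁻ u in Set.Ioc (0:ℝ) 1,
          ENNReal.ofReal u⁻¹ * min (ENNReal.ofReal u) (μ (Set.Ioi x)) ∂volume := by
        refine setLIntegral_congr_fun measurableSet_Ioc (fun u hu => ?_)
        have hset2 : MeasurableSet {t : ℝ | (μ (Set.Ioi t)).toReal < u} :=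
          measurableSet_lt (G_meas μ) measurable_const
        have heq : (fun t => F (t, u))
            = fun t => ({t : ℝ | (μ (Set.Ioi t)).toReal < u}).indicator
                (fun _ => ENNReal.ofReal u⁻¹) t := by
          funext t
          simp [hFdef, Set.indicator_apply, Set.mem_setOf_eq]
        rw [heq, lintegral_indicator hset2, Measure.restrict_restrict hset2,
          setLIntegral_const, hlevelr x hu.1 (hlevel hu.1)]
    _ = ENNReal.ofReal g + ENNReal.ofReal (-Real.log g * g) := by
        have hμg : μ (Set.Ioi x) = ENNReal.ofReal g :=
          (ENNReal.ofReal_toReal (measure_ne_top μ _)).symm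
        rw [hμg, ← Set.Ioc_union_Ioc_eq_Ioc hgpos.le hg1,
          lintegral_union measurableSet_Ioc (Set.Ioc_disjoint_Ioc_of_le le_rfl)]
        congr 1
        · calc ∫⁻ u in Set.Ioc (0:ℝ) g,
                ENNReal.ofReal u⁻¹ * min (ENNReal.ofReal u) (ENNReal.ofReal g) ∂volume
              = ∫⁻ _ in Set.Ioc (0:ℝ) g, 1 ∂volume := by
                refine setLIntegral_congr_fun measurableSet_Ioc
                  (fun u hu => ?_)
                rw [min_eq_left (ENNReal.ofReal_le_ofReal hu.2),
                  ← ENNReal.ofReal_mul (inv_nonneg.mpr hu.1.le),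
                  inv_mul_cancel₀ hu.1.ne', ENNReal.ofReal_one]
            _ = ENNReal.ofReal g := by
                rw [setLIntegral_one, Real.volume_Ioc, sub_zero]
        · calc ∫⁻ u in Set.Ioc g 1,
                ENNReal.ofReal u⁻¹ * min (ENNReal.ofReal u) (ENNReal.ofReal g) ∂volume
              = ∫⁻ u in Set.Ioc g 1, ENNReal.ofReal (u⁻¹ * g) ∂volume := by
                refine setLIntegral_congr_fun measurableSet_Ioc
                  (fun u hu => ?_)
                rw [min_eq_right (ENNReal.ofReal_le_ofReal hu.1.le),
                  ← ENNReal.ofReal_mul (inv_nonneg.mpr (hgpos.trans hu.1).le)]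
            _ = ENNReal.ofReal (-Real.log g * g) := by
                rw [← ofReal_integral_eq_lintegral_ofReal
                  ((inv_integrableOn hgpos hg1).mul_const g)
                  ((ae_restrict_mem measurableSet_Ioc).mono fun u hu => by
                    have : 0 < u := hgpos.trans hu.1
                    positivity)]
                congr 1
                rw [MeasureTheory.integral_mul_const]
                congr 1
                rw [← intervalIntegral.integral_of_le hg1, integral_inv (by
                  rw [Set.uIcc_of_le hg1]; intro h; exact absurd h.1 (not_le.mpr hgpos))]
                rw [Real.log_div one_ne_zero (ne_of_gt hgpos), Real.log_one, zero_sub]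
    _ = ENNReal.ofReal (g * (1 - Real.log g)) := by
        rw [← ENNReal.ofReal_add hgpos.le
          (mul_nonneg (neg_nonneg.mpr (Real.log_nonpos hgpos.le hg1)) hgpos.le)]
        congr 1
        ring


lemma key_lintegral' (hcont : ∀ x : ℝ, μ {x} = 0) (x : ℝ) :
    ∫⁻ t in Set.Ioi x, ENNReal.ofReal (-Real.log (μ (Set.Ioi t)).toReal) ∂μ
      = ENNReal.ofReal ((μ (Set.Ioi x)).toReal * (1 - Real.log (μ (Set.Ioi x)).toReal)) :=
  key_lintegral μ hcont (zero_set μ hcont)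
    (fun {u} hu {x} hux => level_meas μ hcont hu hux)
    (fun x {u} hu hl => level_meas_restrict μ hcont x hu hl) x

lemma key_integral (hcont : ∀ x : ℝ, μ {x} = 0) (x : ℝ) :
    IntegrableOn (fun t => 1 + Real.log (μ (Set.Ioi t)).toReal) (Set.Ioi x) μ ∧
    ∫ t in Set.Ioi x, (1 + Real.log (μ (Set.Ioi t)).toReal) ∂μ
      = (μ (Set.Ioi x)).toReal * Real.log (μ (Set.Ioi x)).toReal := by
  have hlog_nonpos : ∀ t : ℝ, Real.log (μ (Set.Ioi t)).toReal ≤ 0 := fun t =>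
    Real.log_nonpos ENNReal.toReal_nonneg (G_le_one μ t)
  have hmeas : Measurable (fun t : ℝ => Real.log (μ (Set.Ioi t)).toReal) :=
    Real.measurable_log.comp (G_meas μ)
  have hkey := key_lintegral' μ hcont x
  have hval_nonneg : 0 ≤ (μ (Set.Ioi x)).toReal * (1 - Real.log (μ (Set.Ioi x)).toReal) :=
    mul_nonneg ENNReal.toReal_nonneg (by linarith [hlog_nonpos x])
  have hintlog : IntegrableOn (fun t => Real.log (μ (Set.Ioi t)).toReal) (Set.Ioi x) μ := by
    refine ⟨hmeas.aestronglyMeasurable.restrict, ?_⟩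
    rw [hasFiniteIntegral_iff_norm]
    have heq : ∀ t : ℝ, ENNReal.ofReal ‖Real.log (μ (Set.Ioi t)).toReal‖
        = ENNReal.ofReal (-Real.log (μ (Set.Ioi t)).toReal) := fun t => by
      rw [Real.norm_eq_abs, abs_of_nonpos (hlog_nonpos t)]
    simp_rw [heq]
    rw [hkey]
    exact ENNReal.ofReal_lt_top
  have hneg : ∫ t in Set.Ioi x, -Real.log (μ (Set.Ioi t)).toReal ∂μ
      = (μ (Set.Ioi x)).toReal * (1 - Real.log (μ (Set.Ioi x)).toReal) := by
    rw [integral_eq_lintegral_of_nonneg_ae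
      (Eventually.of_forall fun t => neg_nonneg.mpr (hlog_nonpos t))
      hmeas.neg.aestronglyMeasurable.restrict]
    rw [hkey, ENNReal.toReal_ofReal hval_nonneg]
  have hlogval : ∫ t in Set.Ioi x, Real.log (μ (Set.Ioi t)).toReal ∂μ
      = (μ (Set.Ioi x)).toReal * Real.log (μ (Set.Ioi x)).toReal - (μ (Set.Ioi x)).toReal := by
    have h2 : ∫ t in Set.Ioi x, -Real.log (μ (Set.Ioi t)).toReal ∂μ
        = -∫ t in Set.Ioi x, Real.log (μ (Set.Ioi t)).toReal ∂μ := integral_neg _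
    rw [h2] at hneg
    linarith [hneg]
  constructor
  · exact (integrable_const 1).add hintlog
  · rw [integral_add (integrable_const 1) hintlog, hlogval, integral_const]
    simp only [Measure.real, Measure.restrict_apply_univ, smul_eq_mul, mul_one]
    ring
end

section

lemma slice_integrable {t : ℝ} (ht : 0 < t) (c : ℝ) :
    IntegrableOn (fun x : ℝ => 2 * x * c) (Set.Ioo 0 t) volume := by
  have h : IntervalIntegrable (fun x : ℝ => 2 * x * c) volume 0 t :=
    Continuous.intervalIntegrable (by continuity) _ _
  exact ((intervalIntegrable_iff_integrableOn_Ioc_of_le ht.le).mp h).mono_set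
    Set.Ioo_subset_Ioc_self

lemma slice_integral {t : ℝ} (ht : 0 < t) (c : ℝ) :
    ∫ x in Set.Ioo (0:ℝ) t, 2 * x * c ∂volume = t ^ 2 * c := by
  rw [setIntegral_congr_set Ioo_ae_eq_Ioc, ← intervalIntegral.integral_of_le ht.le]
  have h : (fun x : ℝ => 2 * x * c) = fun x => (2 * c) * x := by funext x; ring
  rw [h, intervalIntegral.integral_const_mul, integral_id]
  ring

theorem wcre_alt_expression (μ : Measure ℝ) [IsProbabilityMeasure μ]
    (hsupp : μ (Set.Iio 0) = 0) (hcont : ∀ x : ℝ, μ {x} = 0)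
    (hfin : IntegrableOn
      (fun x : ℝ => x * (μ (Set.Ioi x)).toReal * Real.log (μ (Set.Ioi x)).toReal)
      (Set.Ioi 0))
    (hfin2 : Integrable
      (fun x : ℝ => x ^ 2 * (1 + Real.log (μ (Set.Ioi x)).toReal)) μ) :
    -∫ x in Set.Ioi (0:ℝ),
        x * (μ (Set.Ioi x)).toReal * Real.log (μ (Set.Ioi x)).toReal
      = -(1/2) * ∫ x, x ^ 2 * (1 + Real.log (μ (Set.Ioi x)).toReal) ∂μ := by
  have hIic : μ (Set.Iic 0) = 0 := by
    have hu : Set.Iic (0:ℝ) = Set.Iio 0 ∪ {0} := by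
      ext y; simp [le_iff_lt_or_eq]
    rw [hu]
    refine le_antisymm ((measure_union_le _ _).trans ?_) (zero_le)
    simp [hsupp, hcont 0]
  have hae_pos : ∀ᵐ t ∂μ, 0 < t := by
    rw [ae_iff]
    convert hIic using 2
    ext t; simp
  set ν := volume.restrict (Set.Ioi (0:ℝ)) with hν
  set f : ℝ × ℝ → ℝ := fun p => ({q : ℝ × ℝ | q.2 < q.1}).indicator
    (fun q => 2 * q.2 * (1 + Real.log (μ (Set.Ioi q.1)).toReal)) p with hf
  have hinnermeas : Measurable (fun q : ℝ × ℝ =>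
      2 * q.2 * (1 + Real.log (μ (Set.Ioi q.1)).toReal)) :=
    (measurable_const.mul measurable_snd).mul
      (measurable_const.add (Real.measurable_log.comp ((G_meas μ).comp measurable_fst)))
  have hsetm : MeasurableSet {q : ℝ × ℝ | q.2 < q.1} :=
    measurableSet_lt measurable_snd measurable_fst
  have hmeasf : Measurable f := hinnermeas.indicator hsetm
  -- slice in x for fixed t > 0
  have hslice : ∀ t : ℝ, 0 < t →
      ∫ x, f (t, x) ∂ν = t ^ 2 * (1 + Real.log (μ (Set.Ioi t)).toReal) := by
    intro t ht
    have heq : (fun x => f (t, x)) = fun x => (Set.Iio t).indicator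
        (fun x => 2 * x * (1 + Real.log (μ (Set.Ioi t)).toReal)) x := by
      funext x
      simp [hf, Set.indicator_apply, Set.mem_setOf_eq, Set.mem_Iio]
    rw [heq, integral_indicator measurableSet_Iio, hν,
      Measure.restrict_restrict measurableSet_Iio]
    have hint : Set.Iio t ∩ Set.Ioi 0 = Set.Ioo (0:ℝ) t := by
      ext y; simp [Set.mem_Ioo, and_comm]
    rw [hint, slice_integral ht]
  -- finiteness on the product
  have hHFI : HasFiniteIntegral f (μ.prod ν) := by
    rw [hasFiniteIntegral_iff_norm,
      lintegral_prod _ (hmeasf.norm.ennreal_ofReal.aemeasurable)]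
    have hbound : ∀ᵐ t ∂μ, ∫⁻ x, ENNReal.ofReal ‖f (t, x)‖ ∂ν
        = ENNReal.ofReal ‖t ^ 2 * (1 + Real.log (μ (Set.Ioi t)).toReal)‖ := by
      filter_upwards [hae_pos] with t ht
      set c := 1 + Real.log (μ (Set.Ioi t)).toReal with hc
      have heq : (fun x => ENNReal.ofReal ‖f (t, x)‖)
          = fun x => (Set.Iio t).indicator (fun x => ENNReal.ofReal ‖2 * x * c‖) x := by
        funext x
        by_cases hx : x < t
        · simp [hf, Set.indicator_apply, Set.mem_setOf_eq, Set.mem_Iio, hx, hc]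
        · simp [hf, Set.indicator_apply, Set.mem_setOf_eq, Set.mem_Iio, hx]
      rw [heq, lintegral_indicator measurableSet_Iio, hν,
        Measure.restrict_restrict measurableSet_Iio]
      have hint : Set.Iio t ∩ Set.Ioi 0 = Set.Ioo (0:ℝ) t := by
        ext y; simp [Set.mem_Ioo, and_comm]
      rw [hint]
      have heq2 : ∫⁻ x in Set.Ioo (0:ℝ) t, ENNReal.ofReal ‖2 * x * c‖ ∂volume
          = ∫⁻ x in Set.Ioo (0:ℝ) t, ENNReal.ofReal (2 * x * |c|) ∂volume := by
        refine setLIntegral_congr_fun measurableSet_Ioo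
          (fun x hx => ?_)
        rw [Real.norm_eq_abs, abs_mul, abs_mul]
        rw [abs_of_nonneg (by norm_num : (0:ℝ) ≤ 2), abs_of_nonneg hx.1.le]
      rw [heq2, ← ofReal_integral_eq_lintegral_ofReal (slice_integrable ht _)
        ((ae_restrict_mem measurableSet_Ioo).mono fun x hx => by have h0x := hx.1; positivity)]
      rw [slice_integral ht]
      rw [Real.norm_eq_abs, abs_mul, abs_of_nonneg (sq_nonneg t)]
    rw [lintegral_congr_ae hbound]
    have := hfin2.hasFiniteIntegral
    rwa [hasFiniteIntegral_iff_norm] at this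
  have hintf : Integrable f (μ.prod ν) := ⟨hmeasf.aestronglyMeasurable, hHFI⟩
  -- Fubini
  have hswap : ∫ t, (∫ x, f (t, x) ∂ν) ∂μ = ∫ x, (∫ t, f (t, x) ∂μ) ∂ν :=
    integral_integral_swap hintf
  -- chain A
  have hA : ∫ t, (∫ x, f (t, x) ∂ν) ∂μ
      = ∫ t, t ^ 2 * (1 + Real.log (μ (Set.Ioi t)).toReal) ∂μ := by
    refine integral_congr_ae ?_
    filter_upwards [hae_pos] with t ht using hslice t ht
  -- chain B
  have hB : ∫ x, (∫ t, f (t, x) ∂μ) ∂ν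
      = ∫ x in Set.Ioi (0:ℝ),
          2 * (x * (μ (Set.Ioi x)).toReal * Real.log (μ (Set.Ioi x)).toReal) ∂volume := by
    rw [hν]
    refine setIntegral_congr_fun measurableSet_Ioi fun x hx => ?_
    have heq : (fun t => f (t, x)) = fun t => (Set.Ioi x).indicator
        (fun t => 2 * x * (1 + Real.log (μ (Set.Ioi t)).toReal)) t := by
      funext t
      simp [hf, Set.indicator_apply, Set.mem_setOf_eq, Set.mem_Ioi]
    rw [heq, integral_indicator measurableSet_Ioi]
    have heq2 : (fun t => 2 * x * (1 + Real.log (μ (Set.Ioi t)).toReal))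
        = fun t => (2 * x) * (1 + Real.log (μ (Set.Ioi t)).toReal) := rfl
    rw [heq2, integral_const_mul, (key_integral μ hcont x).2]
    ring
  -- combine
  have hmain : ∫ t, t ^ 2 * (1 + Real.log (μ (Set.Ioi t)).toReal) ∂μ
      = 2 * ∫ x in Set.Ioi (0:ℝ),
          x * (μ (Set.Ioi x)).toReal * Real.log (μ (Set.Ioi x)).toReal ∂volume := by
    rw [← hA, hswap, hB]
    have h2 : (fun x : ℝ => 2 * (x * (μ (Set.Ioi x)).toReal * Real.log (μ (Set.Ioi x)).toReal))
        = fun x : ℝ => (2:ℝ) * (x * (μ (Set.Ioi x)).toReal * Real.log (μ (Set.Ioi x)).toReal) :=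
      rfl
    rw [h2, integral_const_mul]
  rw [hmain]
  ring
end
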